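/- arXiv:2306.06231 — 2 statements merged into one kernel-verified Lean document; each statement's English description precedes it below -/
import Mathlib

section
/- Let n ≥ 2 be an integer and α > −1 a real number. Define u ∈ ℂⁿ by u_0 := sqrt((α+3)/(2(α+2))), u_1 := sqrt((α+1)/(2(α+2))), and u_j := 0 for 2 ≤ j ≤ n−1, and let v := e_0 = (1,0,…,0) ∈ ℂⁿ. Then ‖u‖ = ‖v‖ = 1 and, for every a ∈ L∞_lim([0,1)), ⟨γ(a)_0 u, u⟩ = ⟨γ(a)_2 v, v⟩; that is, Σ_{j,k=0}^{n−1} conj(u_j)·γ(a)_{0,j,k}·u_k = γ(a)_{2,0,0}. -/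
open MeasureTheory Filter
open scoped ENNReal

noncomputable section

/-- Generalized binomial coefficient `x(x-1)⋯(x-j+1)/j!`. -/
def gbinom (x : ℝ) (j : ℕ) : ℝ :=
  (∏ i ∈ Finset.range j, (x - i)) / (Nat.factorial j)

/-- Shifted Jacobi polynomial `Q_m^{(α,β)}` on `[0,1]`:
`Q_m^{(α,β)}(t) = Σ_{k=0}^m binom(α+β+m+k,k)·binom(β+m,m-k)·(-1)^{m-k}·t^k`. -/
def jacQ (α β : ℝ) (m : ℕ) (t : ℝ) : ℝ :=
  ∑ k ∈ Finset.range (m + 1),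
    gbinom (α + β + m + k) k * gbinom (β + m) (m - k) * (-1 : ℝ) ^ (m - k) * t ^ k

/-- Normalizing coefficient
`κ(α,β,m) = sqrt((2m+α+β+1)·Γ(m+α+β+1)·m!/(Γ(m+α+1)·Γ(m+β+1)))`. -/
def jacCoef (α β : ℝ) (m : ℕ) : ℝ :=
  Real.sqrt ((2 * m + α + β + 1) * Real.Gamma (m + α + β + 1) * (Nat.factorial m) /
    (Real.Gamma (m + α + 1) * Real.Gamma (m + β + 1)))

/-- Jacobi function `J_m^{(α,β)}(t) = κ(α,β,m)·(1-t)^{α/2}·t^{β/2}·Q_m^{(α,β)}(t)`. -/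
def jacJ (α β : ℝ) (m : ℕ) (t : ℝ) : ℝ :=
  jacCoef α β m * (1 - t) ^ (α / 2) * t ^ (β / 2) * jacQ α β m t

/-- `dd n ξ = min(n+ξ, n)` (for `ξ ≥ 1-n`), written as a total function into `ℕ`. -/
def dd (n : ℕ) (ξ : ℤ) : ℕ := n - (-ξ).toNat

lemma dd_le (n : ℕ) (ξ : ℤ) : dd n ξ ≤ n := Nat.sub_le _ _

/-- The set `Ω_n = {ξ ∈ ℤ : ξ ≥ -n+1}` as a subtype. -/
abbrev Om (n : ℕ) : Type := {ξ : ℤ // 1 - (n : ℤ) ≤ ξ}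

/-- The entry `γ(a)_{ξ,j,k} = κ(α,|ξ|,j)·κ(α,|ξ|,k)·
∫₀¹ a(√t)·Q_j^{(α,|ξ|)}(t)·Q_k^{(α,|ξ|)}(t)·(1-t)^α·t^{|ξ|} dt`. -/
def gammaEnt (α : ℝ) (a : ℝ → ℂ) (ξ : ℤ) (j k : ℕ) : ℂ :=
  ((jacCoef α ξ.natAbs j * jacCoef α ξ.natAbs k : ℝ) : ℂ) *
    ∫ t in (0:ℝ)..1, a (Real.sqrt t) *
      ((jacQ α ξ.natAbs j t * jacQ α ξ.natAbs k t * (1 - t) ^ α * t ^ (ξ.natAbs) : ℝ) : ℂ)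

/-- The matrix `γ(a)_ξ ∈ M_{d_ξ}(ℂ)`. -/
def gammaMat (n : ℕ) (α : ℝ) (a : ℝ → ℂ) (ξ : ℤ) :
    Matrix (Fin (dd n ξ)) (Fin (dd n ξ)) ℂ :=
  Matrix.of fun j k => gammaEnt α a ξ (j : ℕ) (k : ℕ)

/-- Bounded measurable functions on `[0,1)` having a finite limit at `1⁻`. -/
def LinfLim (a : ℝ → ℂ) : Prop :=
  Measurable a ∧ (∃ C : ℝ, ∀ r ∈ Set.Ico (0:ℝ) 1, ‖a r‖ ≤ C) ∧
    ∃ ω : ℂ, Tendsto a (nhdsWithin 1 (Set.Ico (0:ℝ) 1)) (nhds ω)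

/-- The generating symbol `g_p(t) = Q_p^{(α,0)}(t²)`, as a complex-valued function. -/
def gSym (α : ℝ) (p : ℕ) (t : ℝ) : ℂ := ((jacQ α 0 p (t ^ 2) : ℝ) : ℂ)

/-- `⟨A w, w⟩ = Σ_{j,k} conj(w_j)·A_{j,k}·w_k`. -/
def innerForm {d : ℕ} (A : Matrix (Fin d) (Fin d) ℂ) (w : Fin d → ℂ) : ℂ :=
  ∑ j : Fin d, ∑ k : Fin d, (starRingEnd ℂ) (w j) * A j k * w k

lemma jacQ_zero (α β t : ℝ) : jacQ α β 0 t = 1 := by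
  simp [jacQ, gbinom]

lemma jacQ01 (α t : ℝ) : jacQ α 0 1 t = (α + 2) * t - 1 := by
  simp [jacQ, gbinom, Finset.sum_range_succ, Finset.prod_range_succ]
  ring

lemma jacCoef00 (α : ℝ) (hα : -1 < α) : jacCoef α 0 0 = Real.sqrt (α + 1) := by
  have h := (Real.Gamma_pos_of_pos (show (0:ℝ) < α + 1 by linarith)).ne'
  unfold jacCoef
  congr 1
  simp [Real.Gamma_one]
  field_simp

lemma Gamma_two' : Real.Gamma 2 = 1 := by
  rw [show (2:ℝ) = 1 + 1 by norm_num, Real.Gamma_add_one one_ne_zero, Real.Gamma_one, mul_one]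

lemma Gamma_three' : Real.Gamma 3 = 2 := by
  rw [show (3:ℝ) = 2 + 1 by norm_num, Real.Gamma_add_one two_ne_zero, Gamma_two', mul_one]

lemma jacCoef01 (α : ℝ) (hα : -1 < α) : jacCoef α 0 1 = Real.sqrt (α + 3) := by
  have h := (Real.Gamma_pos_of_pos (show (0:ℝ) < α + 2 by linarith)).ne'
  unfold jacCoef
  congr 1
  rw [show ((1:ℕ):ℝ) + α + 0 + 1 = α + 2 by push_cast; ring,
    show ((1:ℕ):ℝ) + α + 1 = α + 2 by push_cast; ring,
    show ((1:ℕ):ℝ) + 0 + 1 = 2 by push_cast; ring, Gamma_two']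
  field_simp
  ring

lemma jacCoef20 (α : ℝ) (hα : -1 < α) :
    jacCoef α 2 0 = Real.sqrt ((α + 1) * (α + 2) * (α + 3) / 2) := by
  have h1 : (0:ℝ) < Real.Gamma (α + 1) := Real.Gamma_pos_of_pos (by linarith)
  unfold jacCoef
  congr 1
  rw [show ((0:ℕ):ℝ) + α + 2 + 1 = (α + 2) + 1 by push_cast; ring,
    show ((0:ℕ):ℝ) + α + 1 = α + 1 by push_cast; ring,
    show ((0:ℕ):ℝ) + 2 + 1 = (3:ℝ) by push_cast; ring,
    Real.Gamma_add_one (by linarith : α + 2 ≠ 0),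
    show (α:ℝ) + 2 = (α + 1) + 1 by ring,
    Real.Gamma_add_one (by linarith : α + 1 ≠ 0),
    Gamma_three']
  field_simp
  ring

lemma key_integrable (α : ℝ) (hα : -1 < α) (a : ℝ → ℂ) (ham : Measurable a)
    (C : ℝ) (hC : ∀ r ∈ Set.Ico (0:ℝ) 1, ‖a r‖ ≤ C)
    (P : ℝ → ℝ) (hP : Continuous P) :
    IntervalIntegrable (fun t => a (Real.sqrt t) * ((P t * (1 - t) ^ α : ℝ) : ℂ))
      volume 0 1 := by
  obtain ⟨M, hM⟩ := (isCompact_Icc (a := (0:ℝ)) (b := 1)).exists_bound_of_continuousOn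
    hP.continuousOn
  have hC0 : 0 ≤ C := le_trans (norm_nonneg _) (hC 0 ⟨le_refl _, one_pos⟩)
  have hM0 : 0 ≤ M := le_trans (norm_nonneg _) (hM 0 ⟨le_refl _, one_pos.le⟩)
  have hg : IntervalIntegrable (fun t : ℝ => C * M * (1 - t) ^ α) volume 0 1 := by
    have h1 : IntervalIntegrable (fun t : ℝ => t ^ α) volume 0 1 :=
      intervalIntegral.intervalIntegrable_rpow' hα
    have h2 := (h1.comp_sub_left 1)
    simp only [sub_zero, sub_self] at h2
    exact (h2.symm).const_mul _
  apply hg.mono_fun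
  · exact ((ham.comp Real.continuous_sqrt.measurable).mul
      (Complex.measurable_ofReal.comp
        (hP.measurable.mul ((measurable_const.sub measurable_id).pow measurable_const)))).aestronglyMeasurable
  · have hne : ∀ᵐ x ∂(volume.restrict (Set.uIoc (0:ℝ) 1)), x ≠ 1 := by
      apply ae_restrict_of_ae
      rw [ae_iff]
      have : {x : ℝ | ¬ x ≠ 1} = {1} := by ext x; simp
      rw [this]
      exact measure_singleton 1
    filter_upwards [ae_restrict_mem measurableSet_uIoc, hne] with x hx hx1
    rw [Set.uIoc_of_le (by norm_num : (0:ℝ) ≤ 1)] at hx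
    have hx0 : 0 < x := hx.1
    have hx2 : x < 1 := lt_of_le_of_ne hx.2 hx1
    have hrp : (0:ℝ) ≤ (1 - x) ^ α := Real.rpow_nonneg (by linarith) α
    have hsa : ‖a (Real.sqrt x)‖ ≤ C := by
      refine hC _ ⟨Real.sqrt_nonneg _, ?_⟩
      rw [show (1:ℝ) = Real.sqrt 1 by simp]
      exact Real.sqrt_lt_sqrt hx0.le hx2
    have hPx : |P x| ≤ M := hM x ⟨hx0.le, hx.2⟩
    calc ‖a (Real.sqrt x) * ((P x * (1 - x) ^ α : ℝ) : ℂ)‖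
        = ‖a (Real.sqrt x)‖ * (|P x| * (1 - x) ^ α) := by
          rw [norm_mul, Complex.norm_real, Real.norm_eq_abs, abs_mul, abs_of_nonneg hrp]
      _ ≤ C * (M * (1 - x) ^ α) := by
          apply mul_le_mul hsa (mul_le_mul_of_nonneg_right hPx hrp)
            (mul_nonneg (abs_nonneg _) hrp) hC0
      _ ≤ ‖C * M * (1 - x) ^ α‖ := by
          rw [Real.norm_eq_abs, abs_of_nonneg (by positivity)]
          ring_nf; exact le_refl _


def Jint (α : ℝ) (a : ℝ → ℂ) (P : ℝ → ℝ) : ℂ :=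
  ∫ t in (0:ℝ)..1, a (Real.sqrt t) * ((P t * (1 - t) ^ α : ℝ) : ℂ)

lemma Jadd (α : ℝ) (hα : -1 < α) (a : ℝ → ℂ) (ham : Measurable a)
    (C : ℝ) (hC : ∀ r ∈ Set.Ico (0:ℝ) 1, ‖a r‖ ≤ C)
    (P Q : ℝ → ℝ) (hP : Continuous P) (hQ : Continuous Q) :
    Jint α a (fun t => P t + Q t) = Jint α a P + Jint α a Q := by
  unfold Jint
  rw [← intervalIntegral.integral_add (key_integrable α hα a ham C hC P hP)
    (key_integrable α hα a ham C hC Q hQ)]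
  apply intervalIntegral.integral_congr
  intro t _
  push_cast
  ring

lemma Jsmul (α : ℝ) (a : ℝ → ℂ) (c : ℝ) (P : ℝ → ℝ) :
    Jint α a (fun t => c * P t) = (c : ℂ) * Jint α a P := by
  unfold Jint
  rw [← intervalIntegral.integral_const_mul]
  apply intervalIntegral.integral_congr
  intro t _
  push_cast
  ring

lemma sum_two {M : Type*} [AddCommMonoid M] {n : ℕ} (hn : 2 ≤ n) (f : Fin n → M)
    (h : ∀ j : Fin n, 2 ≤ (j : ℕ) → f j = 0) :
    ∑ j, f j = f ⟨0, by omega⟩ + f ⟨1, by omega⟩ := by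
  have h01 : (⟨0, by omega⟩ : Fin n) ≠ ⟨1, by omega⟩ := by simp [Fin.ext_iff]
  rw [← Finset.sum_pair h01]
  refine (Finset.sum_subset (Finset.subset_univ _) ?_).symm
  intro j _ hj
  apply h
  simp only [Finset.mem_insert, Finset.mem_singleton] at hj
  push_neg at hj
  rcases hj with ⟨h0, h1⟩
  have h0' : (j:ℕ) ≠ 0 := fun hh => h0 (Fin.ext hh)
  have h1' : (j:ℕ) ≠ 1 := fun hh => h1 (Fin.ext hh)
  omega

/-- the pure states associated to `(ξ,u)=(0,u)` and `(η,v)=(2,e₀)` coincide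
on all matrix sequences `γ(a)`, `a ∈ L∞_lim([0,1))`. -/
theorem statement2 (n : ℕ) (hn : 2 ≤ n) (α : ℝ) (hα : -1 < α) :
    let u : Fin n → ℂ := fun j =>
      if (j : ℕ) = 0 then ((Real.sqrt ((α + 3) / (2 * (α + 2))) : ℝ) : ℂ)
      else if (j : ℕ) = 1 then ((Real.sqrt ((α + 1) / (2 * (α + 2))) : ℝ) : ℂ) else 0
    let v : Fin n → ℂ := fun j => if (j : ℕ) = 0 then 1 else 0
    (∑ j : Fin n, ‖u j‖ ^ 2 = 1) ∧
    (∑ j : Fin n, ‖v j‖ ^ 2 = 1) ∧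
    ∀ a : ℝ → ℂ, LinfLim a →
      (∑ j : Fin n, ∑ k : Fin n, (starRingEnd ℂ) (u j) * gammaEnt α a 0 (j : ℕ) (k : ℕ) * u k)
        = (∑ j : Fin n, ∑ k : Fin n,
            (starRingEnd ℂ) (v j) * gammaEnt α a 2 (j : ℕ) (k : ℕ) * v k) := by
  intro u v
  have hα2 : (0:ℝ) < α + 2 := by linarith
  refine ⟨?_, ?_, ?_⟩
  · have hz : ∀ j : Fin n, 2 ≤ (j:ℕ) → ‖u j‖ ^ 2 = 0 := by
      intro j hj
      have h0 : (j:ℕ) ≠ 0 := by omega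
      have h1 : (j:ℕ) ≠ 1 := by omega
      simp [u, h0, h1]
    rw [sum_two hn _ hz]
    have e0 : u ⟨0, by omega⟩ = ((Real.sqrt ((α + 3) / (2 * (α + 2))) : ℝ) : ℂ) := by simp [u]
    have e1 : u ⟨1, by omega⟩ = ((Real.sqrt ((α + 1) / (2 * (α + 2))) : ℝ) : ℂ) := by simp [u]
    rw [e0, e1, Complex.norm_real, Complex.norm_real, Real.norm_eq_abs, Real.norm_eq_abs, sq_abs, sq_abs,
      Real.sq_sqrt (div_nonneg (by linarith) (by linarith)), Real.sq_sqrt (div_nonneg (by linarith) (by linarith))]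
    field_simp
    ring
  · have hz : ∀ j : Fin n, 2 ≤ (j:ℕ) → ‖v j‖ ^ 2 = 0 := by
      intro j hj
      have h0 : (j:ℕ) ≠ 0 := by omega
      simp [v, h0]
    rw [sum_two hn _ hz]
    simp [v]
  · rintro a ⟨ham, ⟨C, hC⟩, -⟩
    have hγ0 : ∀ j k : ℕ, gammaEnt α a 0 j k =
        ((jacCoef α 0 j * jacCoef α 0 k : ℝ) : ℂ) *
          Jint α a (fun t => jacQ α 0 j t * jacQ α 0 k t) := by
      intro j k
      simp only [gammaEnt, Int.natAbs_zero, Nat.cast_zero, pow_zero, mul_one, Jint]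
    have hγ2 : gammaEnt α a 2 0 0 =
        ((jacCoef α 2 0 * jacCoef α 2 0 : ℝ) : ℂ) * Jint α a (fun t => t ^ 2) := by
      have h2 : (2:ℤ).natAbs = 2 := rfl
      simp only [gammaEnt, Jint, h2, Nat.cast_ofNat, jacQ_zero]
      congr 1
      apply intervalIntegral.integral_congr
      intro t _
      dsimp only
      push_cast
      ring
    have hzL : ∀ j : Fin n, 2 ≤ (j:ℕ) →
        (∑ k : Fin n, (starRingEnd ℂ) (u j) * gammaEnt α a 0 (j:ℕ) (k:ℕ) * u k) = 0 := by
      intro j hj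
      have h0 : (j:ℕ) ≠ 0 := by omega
      have h1 : (j:ℕ) ≠ 1 := by omega
      simp [u, h0, h1]
    have hzR : ∀ j : Fin n, 2 ≤ (j:ℕ) →
        (∑ k : Fin n, (starRingEnd ℂ) (v j) * gammaEnt α a 2 (j:ℕ) (k:ℕ) * v k) = 0 := by
      intro j hj
      have h0 : (j:ℕ) ≠ 0 := by omega
      simp [v, h0]
    rw [sum_two hn _ hzL, sum_two hn _ hzR]
    simp [u, v]
    rw [sum_two hn _ ?hz1, sum_two hn _ ?hz2, sum_two hn _ ?hz3]
    case hz1 => intro j hj; have h0 : (j:ℕ) ≠ 0 := by omega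
                have h1 : (j:ℕ) ≠ 1 := by omega
                simp [h0, h1]
    case hz2 => intro j hj; have h0 : (j:ℕ) ≠ 0 := by omega
                have h1 : (j:ℕ) ≠ 1 := by omega
                simp [h0, h1]
    case hz3 => intro j hj; have h0 : (j:ℕ) ≠ 0 := by omega
                simp [h0]
    rw [hγ0 0 0, hγ0 0 1, hγ0 1 0, hγ0 1 1, hγ2, jacCoef00 α hα, jacCoef01 α hα,
      jacCoef20 α hα]
    simp only [jacQ_zero, jacQ01, if_true, if_pos]
    norm_num
    have h1 : (0:ℝ) ≤ α + 1 := by linarith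
    have h3 : (0:ℝ) ≤ α + 3 := by linarith
    have h22 : (0:ℝ) ≤ 2 * (α + 2) := by linarith
    have s1 : Real.sqrt (α+1) * Real.sqrt (α+1) = α + 1 := Real.mul_self_sqrt h1
    have s3 : Real.sqrt (α+3) * Real.sqrt (α+3) = α + 3 := Real.mul_self_sqrt h3
    have sA : Real.sqrt ((α+3)/(2*(α+2))) * Real.sqrt ((α+3)/(2*(α+2))) = (α+3)/(2*(α+2)) :=
      Real.mul_self_sqrt (div_nonneg h3 h22)
    have sB : Real.sqrt ((α+1)/(2*(α+2))) * Real.sqrt ((α+1)/(2*(α+2))) = (α+1)/(2*(α+2)) :=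
      Real.mul_self_sqrt (div_nonneg h1 h22)
    have hK : (0:ℝ) ≤ (α+1)*(α+3)/(2*(α+2)) := div_nonneg (mul_nonneg h1 h3) h22
    have e1 : Real.sqrt ((α+3)/(2*(α+2))) * Real.sqrt (α+1) * Real.sqrt (α+1) *
        Real.sqrt ((α+3)/(2*(α+2))) = (α+1)*(α+3)/(2*(α+2)) := by
      calc _ = (Real.sqrt ((α+3)/(2*(α+2))) * Real.sqrt ((α+3)/(2*(α+2)))) *
            (Real.sqrt (α+1) * Real.sqrt (α+1)) := by ring
        _ = (α+3)/(2*(α+2)) * (α+1) := by rw [sA, s1]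
        _ = (α+1)*(α+3)/(2*(α+2)) := by ring
    have e4 : Real.sqrt ((α+1)/(2*(α+2))) * Real.sqrt (α+3) * Real.sqrt (α+3) *
        Real.sqrt ((α+1)/(2*(α+2))) = (α+1)*(α+3)/(2*(α+2)) := by
      calc _ = (Real.sqrt ((α+1)/(2*(α+2))) * Real.sqrt ((α+1)/(2*(α+2)))) *
            (Real.sqrt (α+3) * Real.sqrt (α+3)) := by ring
        _ = (α+1)/(2*(α+2)) * (α+3) := by rw [sB, s3]
        _ = (α+1)*(α+3)/(2*(α+2)) := by ring
    have e2 : Real.sqrt ((α+3)/(2*(α+2))) * Real.sqrt (α+1) * Real.sqrt (α+3) *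
        Real.sqrt ((α+1)/(2*(α+2))) = (α+1)*(α+3)/(2*(α+2)) := by
      have hA12 := (Real.sqrt_mul (div_nonneg h3 h22) ((α+1)/(2*(α+2)))).symm
      have hB12 := (Real.sqrt_mul h1 (α+3)).symm
      have hbig := (Real.sqrt_mul (mul_nonneg (div_nonneg h3 h22) (div_nonneg h1 h22))
        ((α+1)*(α+3))).symm
      calc _ = (Real.sqrt ((α+3)/(2*(α+2))) * Real.sqrt ((α+1)/(2*(α+2)))) *
            (Real.sqrt (α+1) * Real.sqrt (α+3)) := by ring
        _ = Real.sqrt (((α+3)/(2*(α+2)) * ((α+1)/(2*(α+2)))) * ((α+1)*(α+3))) := by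
            rw [hA12, hB12, hbig]
        _ = Real.sqrt (((α+1)*(α+3)/(2*(α+2)))^2) := by
            congr 1
            field_simp
        _ = (α+1)*(α+3)/(2*(α+2)) := Real.sqrt_sq hK
    have hD : (Real.sqrt ((α+1)*(α+2)*(α+3)) / Real.sqrt 2) *
        (Real.sqrt ((α+1)*(α+2)*(α+3)) / Real.sqrt 2) =
        (α+1)*(α+3)/(2*(α+2)) * (α+2)^2 := by
      rw [div_mul_div_comm,
        Real.mul_self_sqrt (mul_nonneg (mul_nonneg h1 (by linarith)) h3),
        Real.mul_self_sqrt (by norm_num : (0:ℝ) ≤ 2)]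
      field_simp
    have c1 : Continuous (fun _ : ℝ => (1:ℝ)) := continuous_const
    have cq : Continuous (fun t : ℝ => (α+2)*t - 1) := (continuous_const.mul continuous_id).sub continuous_const
    have hJ0 : Jint α a (fun _ => (1:ℝ)) + Jint α a (fun t => (α+2)*t - 1) +
        (Jint α a (fun t => (α+2)*t - 1) +
          Jint α a (fun t => ((α+2)*t - 1) * ((α+2)*t - 1))) =
        (((α+2)^2 : ℝ) : ℂ) * Jint α a (fun t => t^2) := by
      rw [← Jadd α hα a ham C hC _ _ cq (show Continuous (fun t : ℝ => ((α+2)*t - 1) * ((α+2)*t - 1)) from cq.mul cq),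
        ← Jadd α hα a ham C hC _ _ c1 cq,
        ← Jadd α hα a ham C hC _ _ (show Continuous (fun t : ℝ => 1 + ((α+2)*t - 1)) from c1.add cq)
          (show Continuous (fun t : ℝ => (α+2)*t - 1 + ((α+2)*t - 1) * ((α+2)*t - 1)) from
            cq.add (show Continuous (fun t : ℝ => ((α+2)*t - 1) * ((α+2)*t - 1)) from cq.mul cq)),
        ← Jsmul]
      congr 1
      funext t
      ring
    have hJ : Jint α a (fun _ => (1:ℝ)) + Jint α a (fun t => (α+2)*t - 1) +
        (Jint α a (fun t => (α+2)*t - 1) +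
          Jint α a (fun t => ((α+2)*t - 1) * ((α+2)*t - 1))) =
        ((α:ℂ)+2)^2 * Jint α a (fun t => t^2) := by
      push_cast at hJ0
      exact hJ0
    have ce1 : ((Real.sqrt ((α+3)/(2*(α+2))) : ℝ):ℂ) * ((Real.sqrt (α+1):ℝ):ℂ) *
        ((Real.sqrt (α+1):ℝ):ℂ) * ((Real.sqrt ((α+3)/(2*(α+2))):ℝ):ℂ) =
        ((α:ℂ)+1)*((α:ℂ)+3)/(2*((α:ℂ)+2)) := by exact_mod_cast e1
    have ce2 : ((Real.sqrt ((α+3)/(2*(α+2))) : ℝ):ℂ) * ((Real.sqrt (α+1):ℝ):ℂ) *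
        ((Real.sqrt (α+3):ℝ):ℂ) * ((Real.sqrt ((α+1)/(2*(α+2))):ℝ):ℂ) =
        ((α:ℂ)+1)*((α:ℂ)+3)/(2*((α:ℂ)+2)) := by exact_mod_cast e2
    have ce4 : ((Real.sqrt ((α+1)/(2*(α+2))) : ℝ):ℂ) * ((Real.sqrt (α+3):ℝ):ℂ) *
        ((Real.sqrt (α+3):ℝ):ℂ) * ((Real.sqrt ((α+1)/(2*(α+2))):ℝ):ℂ) =
        ((α:ℂ)+1)*((α:ℂ)+3)/(2*((α:ℂ)+2)) := by exact_mod_cast e4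
    have hDc : ((Real.sqrt ((α+1)*(α+2)*(α+3)) : ℝ):ℂ) / ((Real.sqrt 2 : ℝ):ℂ) *
        (((Real.sqrt ((α+1)*(α+2)*(α+3)) : ℝ):ℂ) / ((Real.sqrt 2 : ℝ):ℂ)) =
        ((α:ℂ)+1)*((α:ℂ)+3)/(2*((α:ℂ)+2)) * ((α:ℂ)+2)^2 := by exact_mod_cast hD
    linear_combination (Jint α a (fun _ => (1:ℝ))) * ce1 +
      (Jint α a (fun t => (α+2)*t - 1)) * ce2 +
      (Jint α a (fun t => (α+2)*t - 1)) * ce2 +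
      (Jint α a (fun t => ((α+2)*t - 1) * ((α+2)*t - 1))) * ce4 +
      (((α:ℂ)+1)*((α:ℂ)+3)/(2*((α:ℂ)+2))) * hJ -
      (Jint α a (fun t => t^2)) * hDc
end
end

section
/- Let n ≥ 1 be an integer, α > −1 a real number, p ∈ ℕ₀, and ξ ∈ Ω_n. Then the matrix γ(g_p)_ξ ∈ M_{d_ξ}(ℂ) has real entries, is symmetric (γ(g_p)_{ξ,j,k} = γ(g_p)_{ξ,k,j}), and is (p−|ξ|)-antitriangular: for all j, k ∈ {0,…,d_ξ−1}, γ(g_p)_{ξ,j,k} = 0 whenever j+k < p−|ξ|, and γ(g_p)_{ξ,j,k} ≠ 0 whenever j+k = p−|ξ|. -/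
open MeasureTheory Filter
open scoped ENNReal

noncomputable section

open Polynomial intervalIntegral

lemma gbinom_zero (x : ℝ) : gbinom x 0 = 1 := by simp [gbinom]

lemma gbinom_pos {x : ℝ} {j : ℕ} (h : ∀ i : ℕ, i < j → 0 < x - i) : 0 < gbinom x j := by
  apply div_pos (Finset.prod_pos fun i hi => h i (Finset.mem_range.mp hi))
  exact_mod_cast Nat.factorial_pos j

lemma gbinom_natCast {n : ℕ} (j : ℕ) (h : j ≤ n) : gbinom (n : ℝ) j = (n.choose j : ℝ) := by
  have h1 : (∏ i ∈ Finset.range j, ((n : ℝ) - i)) = (n.descFactorial j : ℝ) := by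
    rw [Nat.descFactorial_eq_prod_range, Nat.cast_prod]
    refine Finset.prod_congr rfl fun i hi => ?_
    rw [Nat.cast_sub (le_trans (Nat.le_of_lt_succ (Nat.lt_succ_of_lt (Finset.mem_range.mp hi))) h)]
  rw [gbinom, h1, Nat.descFactorial_eq_factorial_mul_choose, Nat.cast_mul, mul_comm,
    mul_div_assoc, div_self (by exact_mod_cast Nat.factorial_ne_zero j), mul_one]

lemma factorial_cast_add (m k : ℕ) :
    ((m + k).factorial : ℝ) = (k.factorial : ℝ) * ∏ i ∈ Finset.range m, ((k : ℝ) + 1 + i) := by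
  induction m with
  | zero => simp
  | succ m ih =>
    rw [Finset.prod_range_succ, ← mul_assoc, ← ih]
    have : m + 1 + k = (m + k) + 1 := by omega
    rw [this, Nat.factorial_succ, Nat.cast_mul]
    push_cast; ring

def jacP (α β : ℝ) (m : ℕ) : Polynomial ℝ :=
  ∑ k ∈ Finset.range (m + 1),
    C (gbinom (α + β + m + k) k * gbinom (β + m) (m - k) * (-1 : ℝ) ^ (m - k)) * X ^ k

lemma jacP_eval (α β : ℝ) (m : ℕ) (t : ℝ) : (jacP α β m).eval t = jacQ α β m t := by
  simp [jacP, jacQ, Polynomial.eval_finset_sum]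

lemma jacP_natDegree_le (α β : ℝ) (m : ℕ) : (jacP α β m).natDegree ≤ m := by
  refine Polynomial.natDegree_sum_le_of_forall_le _ _ fun k hk => ?_
  refine (Polynomial.natDegree_C_mul_le _ _).trans ?_
  simpa [Polynomial.natDegree_X_pow] using Nat.lt_succ_iff.mp (Finset.mem_range.mp hk)

lemma jacP_coeff_self (α β : ℝ) (m : ℕ) :
    (jacP α β m).coeff m = gbinom (α + β + m + m) m := by
  rw [jacP, Polynomial.finset_sum_coeff]
  rw [Finset.sum_eq_single m]
  · rw [Polynomial.coeff_C_mul, Polynomial.coeff_X_pow, if_pos rfl, mul_one, Nat.sub_self,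
      gbinom_zero, pow_zero]
    ring
  · intro k hk hkm
    rw [Polynomial.coeff_C_mul, Polynomial.coeff_X_pow, if_neg (fun h => hkm h.symm), mul_zero]
  · intro h; exact absurd (Finset.self_mem_range_succ m) h

lemma coeff_mul_of_natDegree_le {A B : Polynomial ℝ} {a b : ℕ}
    (ha : A.natDegree ≤ a) (hb : B.natDegree ≤ b) :
    (A * B).coeff (a + b) = A.coeff a * B.coeff b := by
  rw [Polynomial.coeff_mul]
  refine Finset.sum_eq_single_of_mem (a, b) (Finset.HasAntidiagonal.mem_antidiagonal.mpr rfl) ?_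
  rintro ⟨i, j⟩ hij hne
  have hij' : i + j = a + b := Finset.HasAntidiagonal.mem_antidiagonal.mp hij
  rcases lt_or_gt_of_ne (fun h : i = a => hne (by simp [h]; omega)) with hlt | hgt
  · have : b < j := by omega
    rw [Polynomial.coeff_eq_zero_of_natDegree_lt (lt_of_le_of_lt hb this), mul_zero]
  · rw [Polynomial.coeff_eq_zero_of_natDegree_lt (lt_of_le_of_lt ha hgt), zero_mul]

variable {α : ℝ}

lemma rpow_int (hα : -1 < α) : IntervalIntegrable (fun t : ℝ => (1 - t) ^ α) volume 0 1 := by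
  have h := (intervalIntegrable_rpow' hα (a := 0) (b := 1)).comp_sub_left 1
  simpa using h.symm

lemma contOn_aux (S : Polynomial ℝ) :
    ContinuousOn (fun t : ℝ => S.eval t * (1 - t) ^ α) (Set.Ioo 0 1) := by
  refine (S.toContinuousMap.continuous.continuousOn).mul ?_
  intro t ht
  refine ContinuousAt.continuousWithinAt ?_
  have h1 : (0:ℝ) < 1 - t := by linarith [ht.2]
  exact (Real.continuousAt_rpow_const (1 - t) α (Or.inl (ne_of_gt h1))).comp
    ((continuous_const.sub continuous_id).continuousAt)

lemma meas_aux (S : Polynomial ℝ) :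
    AEStronglyMeasurable (fun t : ℝ => S.eval t * (1 - t) ^ α)
      (volume.restrict (Set.uIoc (0:ℝ) 1)) := by
  rw [Set.uIoc_of_le (by norm_num : (0:ℝ) ≤ 1),
    Measure.restrict_congr_set (Filter.EventuallyEq.symm Ioo_ae_eq_Ioc)]
  exact (contOn_aux S).aestronglyMeasurable measurableSet_Ioo

lemma poly_rpow_int (hα : -1 < α) (S : Polynomial ℝ) :
    IntervalIntegrable (fun t : ℝ => S.eval t * (1 - t) ^ α) volume 0 1 := by
  obtain ⟨Cb, hCb⟩ := (isCompact_Icc (a := (0:ℝ)) (b := 1)).exists_bound_of_continuousOn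
    (S.toContinuousMap.continuous.continuousOn (s := Set.Icc 0 1))
  refine ((rpow_int hα).const_mul Cb).mono_fun (meas_aux S) ?_
  rw [Set.uIoc_of_le (by norm_num : (0:ℝ) ≤ 1)]
  refine (ae_restrict_iff' measurableSet_Ioc).mpr (Filter.Eventually.of_forall fun t ht => ?_)
  have h1 : (0:ℝ) ≤ 1 - t := by linarith [ht.2]
  have h2 : (0:ℝ) ≤ (1 - t) ^ α := Real.rpow_nonneg h1 α
  have h3 : |S.eval t| ≤ Cb := by simpa using hCb t ⟨le_of_lt ht.1, ht.2⟩
  have hCb0 : |Cb| = Cb := abs_of_nonneg (le_trans (abs_nonneg _) h3)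
  simp only [Real.norm_eq_abs, abs_mul, abs_of_nonneg h2, hCb0]
  nlinarith [abs_nonneg (S.eval t)]

lemma monomial_rpow_int (hα : -1 < α) (i : ℕ) :
    IntervalIntegrable (fun t : ℝ => t ^ i * (1 - t) ^ α) volume 0 1 := by
  have := poly_rpow_int hα (X ^ i)
  simpa using this

lemma Jval (hα : -1 < α) (i : ℕ) :
    ∫ t in (0:ℝ)..1, t ^ i * (1 - t) ^ α
      = (Nat.factorial i : ℝ) / ∏ j ∈ Finset.range (i + 1), (α + 1 + j) := by
  have hre : 0 < Complex.re ((α:ℂ)+1) := by simp; linarith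
  have h1 := Complex.betaIntegral_eval_nat_add_one_right hre i
  have h2 : Complex.betaIntegral ((i:ℂ)+1) ((α:ℂ)+1) = Complex.betaIntegral ((α:ℂ)+1) ((i:ℂ)+1) :=
    Complex.betaIntegral_symm _ _
  have h3 : Complex.betaIntegral ((i:ℂ)+1) ((α:ℂ)+1)
      = ((∫ t in (0:ℝ)..1, t ^ i * (1 - t) ^ α : ℝ) : ℂ) := by
    rw [Complex.betaIntegral, ← intervalIntegral.integral_ofReal]
    refine intervalIntegral.integral_congr fun x hx => ?_
    rw [Set.uIcc_of_le (by norm_num : (0:ℝ) ≤ 1)] at hx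
    have hx1 : (0:ℝ) ≤ 1 - x := by linarith [hx.2]
    have e1 : ((i:ℂ)+1-1) = ((i:ℕ):ℂ) := by ring
    have e2 : ((α:ℂ)+1-1) = (α:ℂ) := by ring
    rw [e1, e2, Complex.cpow_natCast]
    rw [show (1 - (x:ℂ)) = (((1-x : ℝ)):ℂ) by push_cast; ring]
    rw [← Complex.ofReal_cpow hx1 α]
    push_cast
    ring
  have h4 : (((Nat.factorial i : ℝ) / ∏ j ∈ Finset.range (i + 1), (α + 1 + j) : ℝ) : ℂ)
      = (Nat.factorial i : ℂ) / ∏ j ∈ Finset.range (i + 1), ((α:ℂ)+1+j) := by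
    push_cast
    ring
  have := h3.symm.trans (h2.trans h1)
  rw [← h4] at this
  exact_mod_cast this

open fwdDiff in
lemma fwdDiff_poly_eq_zero : ∀ (p : ℕ) (P : Polynomial ℝ), P.degree < (p : WithBot ℕ) →
    (fwdDiff (1:ℝ))^[p] (fun x : ℝ => P.eval x) = 0 := by
  intro p
  induction p with
  | zero =>
    intro P hP
    have h0 : P.degree = ⊥ := by
      have : P.degree < 0 := by exact_mod_cast hP
      exact Nat.WithBot.lt_zero_iff.mp this
    have : P = 0 := Polynomial.degree_eq_bot.mp h0
    funext x
    simp [this]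
  | succ p ih =>
    intro P hP
    rw [Function.iterate_succ_apply]
    have hstep : fwdDiff (1:ℝ) (fun x : ℝ => P.eval x)
        = fun x : ℝ => (P.comp (X + C 1) - P).eval x := by
      funext x
      simp [fwdDiff, Polynomial.eval_comp]
    rw [hstep]
    refine ih _ ?_
    by_cases h0 : P = 0
    · rw [h0]
      simp only [Polynomial.zero_comp, sub_zero, Polynomial.degree_zero]
      exact WithBot.bot_lt_coe p
    · by_cases hd : P.comp (X + C 1) - P = 0
      · rw [hd, Polynomial.degree_zero]
        exact WithBot.bot_lt_coe p
      · have hq : (X + C (1:ℝ)).natDegree = 1 := Polynomial.natDegree_X_add_C (1:ℝ)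
        have hnd : (P.comp (X + C 1)).natDegree = P.natDegree := by
          rw [Polynomial.natDegree_comp, hq, mul_one]
        have hlc : (P.comp (X + C 1)).leadingCoeff = P.leadingCoeff := by
          rw [Polynomial.leadingCoeff_comp (by rw [hq]; norm_num),
            (Polynomial.monic_X_add_C (1:ℝ)).leadingCoeff, one_pow, mul_one]
        have hc0 : P.comp (X + C 1) ≠ 0 := by
          intro h
          apply h0
          rw [← Polynomial.leadingCoeff_eq_zero, ← hlc, h, Polynomial.leadingCoeff_zero]
        have hdeg : (P.comp (X + C 1)).degree = P.degree := by
          rw [Polynomial.degree_eq_natDegree hc0, Polynomial.degree_eq_natDegree h0, hnd]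
        have := Polynomial.degree_sub_lt hdeg hc0 hlc
        rw [hdeg] at this
        refine lt_of_lt_of_le this ?_
        rw [Polynomial.degree_eq_natDegree h0]
        have : P.natDegree < p + 1 := by
          have := hP
          rw [Polynomial.degree_eq_natDegree h0] at this
          exact_mod_cast this
        exact_mod_cast Nat.lt_succ_iff.mp this

open fwdDiff in
lemma altsum_poly (P : Polynomial ℝ) {p : ℕ} (h : P.degree < (p : WithBot ℕ)) :
    ∑ k ∈ Finset.range (p + 1), (-1 : ℝ) ^ (p - k) * (p.choose k) * P.eval (k : ℝ) = 0 := by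
  have h1 := fwdDiff_iter_eq_sum_shift (1:ℝ) (fun x : ℝ => P.eval x) p 0
  rw [fwdDiff_poly_eq_zero p P h] at h1
  have h2 : (0:ℝ) = ∑ k ∈ Finset.range (p + 1),
      ((-1 : ℤ) ^ (p - k) * (p.choose k : ℤ)) • P.eval ((0:ℝ) + k • (1:ℝ)) := h1
  rw [h2]
  refine Finset.sum_congr rfl fun k hk => ?_
  rw [zsmul_eq_mul]
  push_cast
  ring

lemma prod_shift_pos (hα : -1 < α) (N : ℕ) : 0 < ∏ j ∈ Finset.range N, (α + 1 + (j:ℝ)) := by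
  refine Finset.prod_pos fun j _ => ?_
  have : (0:ℝ) ≤ (j:ℝ) := Nat.cast_nonneg j
  linarith

/-- the orthogonality polynomial -/
def Qpoly (α : ℝ) (m p : ℕ) : Polynomial ℝ :=
  (∏ i ∈ Finset.range m, (X + C ((i:ℝ)+1))) * ∏ i ∈ Finset.range (p-m-1), (X + C (α+m+2+i))

lemma Qpoly_eval (m p : ℕ) (k : ℕ) :
    (Qpoly α m p).eval (k:ℝ) = (∏ i ∈ Finset.range m, ((k:ℝ)+1+i)) *
      ∏ i ∈ Finset.range (p-m-1), ((k:ℝ)+(α+m+2+i)) := by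
  simp only [Qpoly, Polynomial.eval_mul, Polynomial.eval_prod, Polynomial.eval_add,
    Polynomial.eval_X, Polynomial.eval_C]
  congr 1
  exact Finset.prod_congr rfl fun i _ => by ring

lemma Qpoly_degree (m p : ℕ) (hmp : m < p) : (Qpoly α m p).degree < (p : WithBot ℕ) := by
  have h1 : ∀ (s : Finset ℕ) (f : ℕ → ℝ), (∏ i ∈ s, (X + C (f i))).Monic ∧
      (∏ i ∈ s, (X + C (f i))).natDegree = s.card := by
    intro s f
    constructor
    · exact Polynomial.monic_prod_of_monic _ _ fun i _ => Polynomial.monic_X_add_C (f i)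
    · rw [Polynomial.natDegree_prod _ _ fun i _ => (Polynomial.monic_X_add_C (f i)).ne_zero]
      simp [Polynomial.natDegree_X_add_C]
  obtain ⟨hm1, hd1⟩ := h1 (Finset.range m) (fun i => (i:ℝ)+1)
  obtain ⟨hm2, hd2⟩ := h1 (Finset.range (p-m-1)) (fun i => α+m+2+i)
  have hnd : (Qpoly α m p).natDegree = m + (p-m-1) := by
    rw [Qpoly, Polynomial.natDegree_mul hm1.ne_zero hm2.ne_zero, hd1, hd2,
      Finset.card_range, Finset.card_range]
  refine lt_of_le_of_lt Polynomial.degree_le_natDegree ?_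
  rw [hnd]
  exact_mod_cast Nat.cast_lt.mpr (by omega : m + (p-m-1) < p)

lemma per_k (hα : -1 < α) {m p k : ℕ} (hmp : m < p) (hk : k ≤ p) :
    gbinom (α + 0 + p + k) k * gbinom (0 + (p:ℝ)) (p - k) * (-1:ℝ)^(p-k) *
      (((m+k).factorial : ℝ) / ∏ j ∈ Finset.range (m+k+1), (α+1+(j:ℝ)))
    = (-1:ℝ)^(p-k) * (p.choose k) * (Qpoly α m p).eval (k:ℝ) /
      ∏ j ∈ Finset.range p, (α+1+(j:ℝ)) := by
  have hB := prod_shift_pos hα (m+k+1)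
  have hD := prod_shift_pos hα p
  have hkf : (k.factorial : ℝ) ≠ 0 := by exact_mod_cast Nat.factorial_ne_zero k
  have e0 : gbinom (0 + (p:ℝ)) (p - k) = (p.choose k : ℝ) := by
    rw [zero_add, gbinom_natCast (p-k) (by omega), Nat.choose_symm hk]
  have e1 : (∏ i ∈ Finset.range k, (α + 0 + (p:ℝ) + k - i))
      = ∏ i ∈ Finset.range k, (α + 1 + ((p:ℝ) + i)) := by
    rw [← Finset.prod_range_reflect (fun i => α + 1 + ((p:ℝ) + i)) k]
    refine Finset.prod_congr rfl fun j hj => ?_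
    have hj' : j < k := Finset.mem_range.mp hj
    push_cast [Nat.cast_sub (by omega : j ≤ k - 1), Nat.cast_sub (by omega : 1 ≤ k)]
    ring
  have key : (∏ j ∈ Finset.range p, (α+1+(j:ℝ))) * ∏ i ∈ Finset.range k, (α + 1 + ((p:ℝ)+i))
      = (∏ j ∈ Finset.range (m+k+1), (α+1+(j:ℝ))) *
        ∏ i ∈ Finset.range (p-m-1), ((k:ℝ)+(α+m+2+i)) := by
    have h1 := Finset.prod_range_add (fun j => α+1+(j:ℝ)) p k
    have h2 := Finset.prod_range_add (fun j => α+1+(j:ℝ)) (m+k+1) (p-m-1)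
    have hpk : p + k = (m+k+1) + (p-m-1) := by omega
    rw [hpk] at h1
    have h3 := h1.symm.trans h2
    have c1 : ∏ i ∈ Finset.range k, (α + 1 + ((p + i : ℕ) : ℝ))
        = ∏ i ∈ Finset.range k, (α + 1 + ((p:ℝ)+i)) :=
      Finset.prod_congr rfl fun i _ => by push_cast; ring
    have c2 : ∏ i ∈ Finset.range (p-m-1), (α + 1 + ((m + k + 1 + i : ℕ) : ℝ))
        = ∏ i ∈ Finset.range (p-m-1), ((k:ℝ)+(α+m+2+i)) :=
      Finset.prod_congr rfl fun i _ => by push_cast; ring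
    rw [c1, c2] at h3
    exact h3
  have hfact : (((m+k).factorial) : ℝ) = (k.factorial : ℝ) * ∏ i ∈ Finset.range m, ((k:ℝ)+1+i) :=
    factorial_cast_add m k
  rw [e0, Qpoly_eval, gbinom, e1, hfact]
  field_simp
  linear_combination (p.choose k : ℝ) * key

lemma ortho_mono (hα : -1 < α) {m p : ℕ} (hmp : m < p) :
    ∫ t in (0:ℝ)..1, t ^ m * jacQ α 0 p t * (1 - t) ^ α = 0 := by
  have hsplit : (fun t : ℝ => t ^ m * jacQ α 0 p t * (1 - t) ^ α)
      = fun t : ℝ => ∑ k ∈ Finset.range (p+1),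
          (gbinom (α + 0 + p + k) k * gbinom (0 + (p:ℝ)) (p - k) * (-1:ℝ)^(p-k)) *
            (t ^ (m+k) * (1 - t) ^ α) := by
    funext t
    rw [jacQ, Finset.mul_sum, Finset.sum_mul]
    refine Finset.sum_congr rfl fun k _ => ?_
    rw [pow_add]
    ring
  rw [hsplit, intervalIntegral.integral_finset_sum
    (fun k _ => (monomial_rpow_int hα (m+k)).const_mul _)]
  have hstep : ∀ k ∈ Finset.range (p+1),
      ∫ t in (0:ℝ)..1, (gbinom (α + 0 + p + k) k * gbinom (0 + (p:ℝ)) (p - k) * (-1:ℝ)^(p-k)) *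
          (t ^ (m+k) * (1 - t) ^ α)
        = (-1:ℝ)^(p-k) * (p.choose k) * (Qpoly α m p).eval (k:ℝ) /
            ∏ j ∈ Finset.range p, (α+1+(j:ℝ)) := by
    intro k hk
    rw [intervalIntegral.integral_const_mul, Jval hα (m+k)]
    exact per_k hα hmp (Nat.lt_succ_iff.mp (Finset.mem_range.mp hk))
  rw [Finset.sum_congr rfl hstep]
  have := altsum_poly (Qpoly α m p) (Qpoly_degree m p hmp)
  rw [← Finset.sum_div, this, zero_div]

lemma jac_rpow_int (hα : -1 < α) (p : ℕ) (S : Polynomial ℝ) :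
    IntervalIntegrable (fun t : ℝ => S.eval t * jacQ α 0 p t * (1 - t) ^ α) volume 0 1 := by
  have h := poly_rpow_int hα (S * jacP α 0 p)
  refine h.congr ?_
  refine fun t _ => ?_
  simp [jacP_eval]

lemma ortho_poly (hα : -1 < α) {p : ℕ} (R : Polynomial ℝ) (hR : R.degree < (p : WithBot ℕ)) :
    ∫ t in (0:ℝ)..1, R.eval t * jacQ α 0 p t * (1 - t) ^ α = 0 := by
  by_cases hR0 : R = 0
  · simp [hR0]
  have hnd : R.natDegree < p := by
    have := hR
    rw [Polynomial.degree_eq_natDegree hR0] at this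
    exact_mod_cast this
  have hsplit : (fun t : ℝ => R.eval t * jacQ α 0 p t * (1 - t) ^ α)
      = fun t : ℝ => ∑ i ∈ Finset.range (R.natDegree + 1),
          R.coeff i * (t ^ i * jacQ α 0 p t * (1 - t) ^ α) := by
    funext t
    rw [Polynomial.eval_eq_sum_range, Finset.sum_mul, Finset.sum_mul]
    exact Finset.sum_congr rfl fun i _ => by ring
  rw [hsplit, intervalIntegral.integral_finset_sum]
  · refine Finset.sum_eq_zero fun i hi => ?_
    rw [intervalIntegral.integral_const_mul,
      ortho_mono hα (lt_of_le_of_lt (Nat.lt_succ_iff.mp (Finset.mem_range.mp hi)) hnd), mul_zero]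
  · intro i _
    have h := (jac_rpow_int hα p (X ^ i)).const_mul (R.coeff i)
    refine h.congr (fun t _ => ?_)
    simp

lemma split_top (hα : -1 < α) {p : ℕ} (S : Polynomial ℝ) (hS : S.natDegree ≤ p) :
    ∫ t in (0:ℝ)..1, S.eval t * jacQ α 0 p t * (1 - t) ^ α
      = S.coeff p * ∫ t in (0:ℝ)..1, t ^ p * jacQ α 0 p t * (1 - t) ^ α := by
  have hdeg : (S - C (S.coeff p) * X ^ p).degree < (p : WithBot ℕ) := by
    refine (Polynomial.degree_lt_iff_coeff_zero _ _).mpr fun q hq => ?_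
    rw [Polynomial.coeff_sub, Polynomial.coeff_C_mul, Polynomial.coeff_X_pow]
    rcases eq_or_lt_of_le hq with h | h
    · rw [← h, if_pos rfl, mul_one, sub_self]
    · rw [if_neg (by omega), mul_zero, sub_zero,
        Polynomial.coeff_eq_zero_of_natDegree_lt (lt_of_le_of_lt hS h)]
  have hsplit : (fun t : ℝ => S.eval t * jacQ α 0 p t * (1 - t) ^ α)
      = fun t : ℝ => S.coeff p * (t ^ p * jacQ α 0 p t * (1 - t) ^ α)
          + (S - C (S.coeff p) * X ^ p).eval t * jacQ α 0 p t * (1 - t) ^ α := by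
    funext t
    rw [Polynomial.eval_sub, Polynomial.eval_mul, Polynomial.eval_C, Polynomial.eval_pow,
      Polynomial.eval_X]
    ring
  rw [hsplit, intervalIntegral.integral_add _ (jac_rpow_int hα p _)]
  · rw [ortho_poly hα _ hdeg, add_zero, intervalIntegral.integral_const_mul]
  · have h := (jac_rpow_int hα p (X ^ p)).const_mul (S.coeff p)
    refine h.congr (fun t _ => ?_)
    simp [mul_assoc]

lemma lead_pos (hα : -1 < α) {β : ℝ} (hβ : 0 ≤ β) (m : ℕ) :
    0 < gbinom (α + β + m + m) m := by
  refine gbinom_pos fun i hi => ?_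
  have h1 : (i:ℝ) + 1 ≤ m := by exact_mod_cast Nat.succ_le_of_lt hi
  have hm : (0:ℝ) ≤ m := Nat.cast_nonneg m
  linarith

lemma sq_int_pos (hα : -1 < α) (p : ℕ) :
    0 < ∫ t in (0:ℝ)..1, (jacP α 0 p).eval t * jacQ α 0 p t * (1 - t) ^ α := by
  set f : ℝ → ℝ := fun t => (jacP α 0 p).eval t * jacQ α 0 p t * (1 - t) ^ α with hf
  have hnn : ∀ t ∈ Set.Icc (0:ℝ) 1, 0 ≤ f t := by
    intro t ht
    have h2 : (0:ℝ) ≤ (1-t)^α := Real.rpow_nonneg (by linarith [ht.2]) α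
    rw [hf]
    simp only
    rw [← jacP_eval]
    exact mul_nonneg (mul_self_nonneg _) h2
  have hInt := jac_rpow_int hα p (jacP α 0 p)
  have hge : 0 ≤ ∫ t in (0:ℝ)..1, f t := intervalIntegral.integral_nonneg (by norm_num) hnn
  rcases lt_or_eq_of_le hge with h | h
  · exact h
  exfalso
  have h0 : ∫ t in Set.Ioc (0:ℝ) 1, f t = 0 := by
    rw [← intervalIntegral.integral_of_le (by norm_num : (0:ℝ) ≤ 1), ← h]
  have hnn' : 0 ≤ᵐ[volume.restrict (Set.Ioc (0:ℝ) 1)] f :=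
    (ae_restrict_iff' measurableSet_Ioc).mpr (Filter.Eventually.of_forall fun t ht =>
      hnn t ⟨le_of_lt ht.1, ht.2⟩)
  have hae : f =ᵐ[volume.restrict (Set.Ioc (0:ℝ) 1)] 0 :=
    (MeasureTheory.integral_eq_zero_iff_of_nonneg_ae hnn' hInt.1).mp h0
  have hne : jacP α 0 p ≠ 0 := by
    intro hcon
    have h1 := jacP_coeff_self α 0 p
    rw [hcon, Polynomial.coeff_zero] at h1
    have := lead_pos hα (le_refl 0) p
    rw [← h1] at this
    exact lt_irrefl 0 this
  set Z : Set ℝ := {x : ℝ | (jacP α 0 p).IsRoot x} ∪ {1} with hZ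
  have hZf : Z.Finite := (Polynomial.finite_setOf_isRoot hne).union (Set.finite_singleton 1)
  have hsub : Set.Ioc (0:ℝ) 1 \ Z ⊆ {t | f t ≠ 0} := by
    intro t ht
    obtain ⟨ht1, ht2⟩ := ht
    have hroot : (jacP α 0 p).eval t ≠ 0 := fun hr => ht2 (Or.inl hr)
    have hone : t ≠ 1 := fun hr => ht2 (Or.inr hr)
    have hpos : (0:ℝ) < (1 - t) ^ α :=
      Real.rpow_pos_of_pos (by rcases ht1 with ⟨_, h⟩; cases lt_or_eq_of_le h with
        | inl h => linarith | inr h => exact absurd h hone) α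
    simp only [Set.mem_setOf_eq, hf]
    rw [← jacP_eval]
    exact mul_ne_zero (mul_ne_zero hroot hroot) (ne_of_gt hpos)
  have hnull : volume.restrict (Set.Ioc (0:ℝ) 1) {t | f t ≠ 0} = 0 := by
    have := hae
    rw [Filter.EventuallyEq, MeasureTheory.ae_iff] at this
    simpa using this
  have h1 : volume.restrict (Set.Ioc (0:ℝ) 1) (Set.Ioc (0:ℝ) 1 \ Z) = 0 :=
    measure_mono_null hsub hnull
  rw [Measure.restrict_apply' measurableSet_Ioc,
    Set.inter_eq_self_of_subset_left Set.diff_subset] at h1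
  rw [measure_diff_null (hZf.measure_zero volume), Real.volume_Ioc] at h1
  simp at h1

lemma Ip_pos (hα : -1 < α) (p : ℕ) :
    0 < ∫ t in (0:ℝ)..1, t ^ p * jacQ α 0 p t * (1 - t) ^ α := by
  have h := sq_int_pos hα p
  rw [split_top hα (jacP α 0 p) (jacP_natDegree_le α 0 p), jacP_coeff_self] at h
  have hL := lead_pos hα (le_refl 0) p
  nlinarith [h, hL]

lemma jacCoef_pos (hα : -1 < α) (b m : ℕ) : 0 < jacCoef α b m := by
  rw [jacCoef]
  apply Real.sqrt_pos.mpr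
  have hb : (0:ℝ) ≤ (b:ℝ) := Nat.cast_nonneg b
  have hm : (0:ℝ) ≤ (m:ℝ) := Nat.cast_nonneg m
  have h1 : (0:ℝ) < 2*m + α + b + 1 := by linarith
  have h2 : 0 < Real.Gamma ((m:ℝ) + α + b + 1) := Real.Gamma_pos_of_pos (by linarith)
  have h3 : 0 < Real.Gamma ((m:ℝ) + α + 1) := Real.Gamma_pos_of_pos (by linarith)
  have h4 : 0 < Real.Gamma ((m:ℝ) + b + 1) := Real.Gamma_pos_of_pos (by linarith)
  have h5 : (0:ℝ) < (m.factorial : ℝ) := by exact_mod_cast Nat.factorial_pos m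
  exact div_pos (mul_pos (mul_pos h1 h2) h5) (mul_pos h3 h4)

theorem statement9' (n : ℕ) (hn : 1 ≤ n) (hα : -1 < α) (p : ℕ) (ξ : ℤ)
    (hξ : 1 - (n : ℤ) ≤ ξ) :
    ∀ j k : Fin (dd n ξ),
      (gammaMat n α (gSym α p) ξ j k).im = 0 ∧
      gammaMat n α (gSym α p) ξ j k = gammaMat n α (gSym α p) ξ k j ∧
      (((j : ℤ) + (k : ℤ) < (p : ℤ) - |ξ|) → gammaMat n α (gSym α p) ξ j k = 0) ∧
      (((j : ℤ) + (k : ℤ) = (p : ℤ) - |ξ|) → gammaMat n α (gSym α p) ξ j k ≠ 0) := by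
  intro j k
  set b : ℕ := ξ.natAbs with hb
  have habs : |ξ| = (b : ℤ) := Int.abs_eq_natAbs ξ
  have hrep : ∀ j' k' : ℕ, gammaEnt α (gSym α p) ξ j' k'
      = ((jacCoef α b j' * jacCoef α b k' *
          ∫ t in (0:ℝ)..1, (jacP α b j' * jacP α b k' * X ^ b).eval t * jacQ α 0 p t *
            (1-t)^α : ℝ) : ℂ) := by
    intro j' k'
    rw [gammaEnt]
    have hcong : (∫ t in (0:ℝ)..1, gSym α p (Real.sqrt t) *
        ((jacQ α b j' t * jacQ α b k' t * (1-t)^α * t^b : ℝ) : ℂ))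
        = ((∫ t in (0:ℝ)..1, (jacP α b j' * jacP α b k' * X ^ b).eval t * jacQ α 0 p t *
            (1-t)^α : ℝ) : ℂ) := by
      rw [← intervalIntegral.integral_ofReal]
      refine intervalIntegral.integral_congr fun t ht => ?_
      rw [Set.uIcc_of_le (by norm_num : (0:ℝ) ≤ 1)] at ht
      rw [gSym, Real.sq_sqrt ht.1, ← Complex.ofReal_mul]
      refine congrArg _ ?_
      rw [Polynomial.eval_mul, Polynomial.eval_mul, Polynomial.eval_pow, Polynomial.eval_X,
        jacP_eval, jacP_eval]
      ring
    rw [hcong, ← Complex.ofReal_mul]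
  have hM : ∀ (j' k' : Fin (dd n ξ)), gammaMat n α (gSym α p) ξ j' k'
      = gammaEnt α (gSym α p) ξ (j' : ℕ) (k' : ℕ) := fun _ _ => rfl
  refine ⟨?_, ?_, ?_, ?_⟩
  · rw [hM, hrep]
    exact Complex.ofReal_im _
  · rw [hM, hM, hrep, hrep]
    rw [mul_comm (jacCoef α b (j:ℕ)) (jacCoef α b (k:ℕ)),
      mul_comm (jacP α b (j:ℕ)) (jacP α b (k:ℕ))]
  · intro hlt
    rw [habs] at hlt
    have hnat : (j : ℕ) + (k : ℕ) + b < p := by omega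
    have hndeg : (jacP α b j * jacP α b k * X ^ b : Polynomial ℝ).natDegree ≤ (j:ℕ) + (k:ℕ) + b :=
      le_trans Polynomial.natDegree_mul_le (add_le_add
        (le_trans Polynomial.natDegree_mul_le
          (add_le_add (jacP_natDegree_le α b j) (jacP_natDegree_le α b k)))
        (le_of_eq (Polynomial.natDegree_X_pow b)))
    have hdeg : (jacP α b j * jacP α b k * X ^ b : Polynomial ℝ).degree < (p : WithBot ℕ) :=
      lt_of_le_of_lt Polynomial.degree_le_natDegree
        (by exact_mod_cast Nat.cast_lt.mpr (lt_of_le_of_lt hndeg hnat))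
    rw [hM, hrep, ortho_poly hα _ hdeg, mul_zero, Complex.ofReal_zero]
  · intro heq
    rw [habs] at heq
    have hp : p = (j : ℕ) + (k : ℕ) + b := by omega
    set S : Polynomial ℝ := jacP α b j * jacP α b k * X ^ b with hS
    have hndeg : S.natDegree ≤ p := by
      rw [hp]
      exact le_trans Polynomial.natDegree_mul_le (add_le_add
        (le_trans Polynomial.natDegree_mul_le
          (add_le_add (jacP_natDegree_le α b j) (jacP_natDegree_le α b k)))
        (le_of_eq (Polynomial.natDegree_X_pow b)))
    have hcoeff : S.coeff p = gbinom (α + b + j + j) (j:ℕ) * gbinom (α + b + k + k) (k:ℕ) := by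
      rw [hS, hp, Polynomial.coeff_mul_X_pow,
        Polynomial.coeff_mul_add_eq_of_natDegree_le (jacP_natDegree_le α b j) (jacP_natDegree_le α b k),
        jacP_coeff_self, jacP_coeff_self]
    have hcpos : 0 < S.coeff p := by
      rw [hcoeff]
      exact mul_pos (lead_pos hα (Nat.cast_nonneg b) j) (lead_pos hα (Nat.cast_nonneg b) k)
    have hint : 0 < ∫ t in (0:ℝ)..1, S.eval t * jacQ α 0 p t * (1-t)^α := by
      rw [split_top hα S hndeg]
      exact mul_pos hcpos (Ip_pos hα p)
    have hpos : 0 < jacCoef α b (j:ℕ) * jacCoef α b (k:ℕ) *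
        ∫ t in (0:ℝ)..1, S.eval t * jacQ α 0 p t * (1-t)^α :=
      mul_pos (mul_pos (jacCoef_pos hα b j) (jacCoef_pos hα b k)) hint
    rw [hM, hrep]
    exact_mod_cast ne_of_gt hpos

/-- `γ(g_p)_ξ` is real, symmetric, and `(p-|ξ|)`-antitriangular. -/
theorem statement9 (n : ℕ) (hn : 1 ≤ n) (α : ℝ) (hα : -1 < α) (p : ℕ) (ξ : ℤ)
    (hξ : 1 - (n : ℤ) ≤ ξ) :
    ∀ j k : Fin (dd n ξ),
      (gammaMat n α (gSym α p) ξ j k).im = 0 ∧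
      gammaMat n α (gSym α p) ξ j k = gammaMat n α (gSym α p) ξ k j ∧
      (((j : ℤ) + (k : ℤ) < (p : ℤ) - |ξ|) → gammaMat n α (gSym α p) ξ j k = 0) ∧
      (((j : ℤ) + (k : ℤ) = (p : ℤ) - |ξ|) → gammaMat n α (gSym α p) ξ j k ≠ 0) := by
  exact statement9' n hn hα p ξ hξ
end
end
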